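/- arXiv:2304.12997 — 2 statements merged into one kernel-verified Lean document; each statement's English description precedes it below -/
import Mathlib

section
/- For a nonzero nilpotent matrix T in M_n(ℂ), the range of T* is not contained in the range of T, and the range of T is not contained in the range of T*. -/
open Matrix

open ComplexOrder

theorem range_not_subset_of_nilpotent
    (n : ℕ) (T : Matrix (Fin n) (Fin n) ℂ)
    (hT0 : T ≠ 0) (hTnil : IsNilpotent T) :
    ¬ (LinearMap.range Tᴴ.mulVecLin ≤ LinearMap.range T.mulVecLin) ∧
    ¬ (LinearMap.range T.mulVecLin ≤ LinearMap.range Tᴴ.mulVecLin) := by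
  -- n = 0 case: T = 0
  rcases Nat.eq_zero_or_pos n with hn | hn
  · subst hn
    exact absurd (Subsingleton.elim T 0) hT0
  -- find a nonzero vector v in range T with T *ᵥ v = 0
  have hexv : ∃ v : Fin n → ℂ, v ≠ 0 ∧ v ∈ LinearMap.range T.mulVecLin ∧ T *ᵥ v = 0 := by
    have hne : ∃ k, T ^ k = 0 := hTnil
    classical
    set k := Nat.find hne with hkdef
    have hk : T ^ k = 0 := Nat.find_spec hne
    have hk1 : 1 < k := by
      rcases Nat.lt_or_ge k 2 with h | h
      · interval_cases k
        · simp only [pow_zero] at hk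
          exact absurd (congrFun (congrFun hk ⟨0, hn⟩) ⟨0, hn⟩) (by simp)
        · simp only [pow_one] at hk
          exact absurd hk hT0
      · exact h
    have hkm : T ^ (k - 1) ≠ 0 := Nat.find_min hne (by omega)
    obtain ⟨x, hx⟩ : ∃ x, (T ^ (k - 1)) *ᵥ x ≠ 0 := by
      by_contra h
      push_neg at h
      apply hkm
      ext i j
      have := congrFun (h (Pi.single j 1)) i
      simpa [Matrix.mulVec_single] using this
    refine ⟨(T ^ (k - 1)) *ᵥ x, hx, ?_, ?_⟩
    · have : T ^ (k - 1) = T * T ^ (k - 2) := by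
        rw [← pow_succ']
        congr 1
        omega
      rw [this, ← Matrix.mulVec_mulVec]
      exact ⟨(T ^ (k - 2)) *ᵥ x, rfl⟩
    · rw [Matrix.mulVec_mulVec, ← pow_succ']
      have : k - 1 + 1 = k := by omega
      rw [this, hk, Matrix.zero_mulVec]
  obtain ⟨v, hv0, hvmem, hvker⟩ := hexv
  -- key: range Tᴴ = range T leads to contradiction
  have key : LinearMap.range Tᴴ.mulVecLin ≠ LinearMap.range T.mulVecLin := by
    intro heq
    have hv' : v ∈ LinearMap.range Tᴴ.mulVecLin := heq ▸ hvmem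
    obtain ⟨w, hw⟩ := hv'
    have hw' : Tᴴ *ᵥ w = v := hw
    have hz : star v ⬝ᵥ v = 0 := by
      calc star v ⬝ᵥ v = star (Tᴴ *ᵥ w) ⬝ᵥ v := by rw [hw']
        _ = (star w ᵥ* T) ⬝ᵥ v := by
            rw [Matrix.star_mulVec, Matrix.conjTranspose_conjTranspose]
        _ = star w ⬝ᵥ (T *ᵥ v) := (Matrix.dotProduct_mulVec _ _ _).symm
        _ = 0 := by rw [hvker, dotProduct_zero]
    exact hv0 (dotProduct_star_self_eq_zero.mp hz)
  have hrank : Tᴴ.rank = T.rank := Matrix.rank_conjTranspose T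
  constructor
  · intro hle
    exact key (Submodule.eq_of_le_of_finrank_eq hle hrank)
  · intro hle
    exact key (Submodule.eq_of_le_of_finrank_eq hle hrank.symm).symm
end

section
/- Let T = I + W* ∈ M_N(ℂ) where W e_i = (1/λ̄) e_{i+1} (1 ≤ i ≤ N−1), W e_N = 0, λ ≠ 0, N ≥ 2. For any n, m ≥ 1, the (1,1) entry of T^n (T*)^m equals 1 + nm|λ|^{−2} plus a nonnegative number; in particular it is ≥ 1 + nm|λ|^{−2}. -/
open Matrix

theorem entry_one_one_lower_bound (N : ℕ) (hN : 2 ≤ N) (lam : ℂ) (hlam : lam ≠ 0)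
    (W : Matrix (Fin N) (Fin N) ℂ)
    (hW : ∀ i j : Fin N, W i j =
      if (i : ℕ) = (j : ℕ) + 1 then 1 / (starRingEnd ℂ) lam else 0)
    (T : Matrix (Fin N) (Fin N) ℂ) (hT : T = 1 + Wᴴ)
    (n m : ℕ) (hn : 1 ≤ n) (hm : 1 ≤ m) :
    ∃ r : ℝ, (T ^ n * (Tᴴ) ^ m) ⟨0, by omega⟩ ⟨0, by omega⟩ = (r : ℂ) ∧
      1 + (n * m : ℝ) / ‖lam‖ ^ 2 ≤ r := by
  have h0 : (0:ℕ) < N := by omega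
  have h1 : (1:ℕ) < N := by omega
  set z : Fin N := ⟨0, h0⟩ with hz
  set o : Fin N := ⟨1, h1⟩ with ho
  -- row 0 of T^k
  have hrow : ∀ k : ℕ, ∀ p : Fin N,
      (T ^ k) z p = (k.choose p.val : ℂ) * (1/lam) ^ p.val := by
    intro k
    induction k with
    | zero =>
      intro p
      rw [pow_zero, Matrix.one_apply]
      rcases eq_or_ne z p with h | h
      · have : p.val = 0 := by rw [← h]
        simp [h, this]
      · have : p.val ≠ 0 := by
          intro hc
          exact h (Fin.ext (by simp [hz, hc])).symm
        simp [h, Nat.choose_eq_zero_of_lt (by omega : 0 < p.val), this]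
    | succ k ih =>
      intro p
      rw [pow_succ, Matrix.mul_apply]
      have hTentry : ∀ q : Fin N, T q p =
          (if q = p then (1:ℂ) else 0) +
          (if (p:ℕ) = (q:ℕ) + 1 then 1/lam else 0) := by
        intro q
        rw [hT]
        simp only [Matrix.add_apply, Matrix.one_apply, Matrix.conjTranspose_apply, hW]
        congr 1
        split <;> simp [hlam]
      simp only [hTentry, mul_add, Finset.sum_add_distrib]
      have hs1 : ∑ q : Fin N, (T ^ k) z q * (if q = p then (1:ℂ) else 0)
          = (T ^ k) z p := by
        simp [mul_ite]
      rw [hs1]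
      by_cases hp : p.val = 0
      · have hs2 : ∑ q : Fin N, (T ^ k) z q * (if (p:ℕ) = (q:ℕ) + 1 then 1/lam else 0)
            = 0 := by
          apply Finset.sum_eq_zero
          intro q _
          have : ¬ ((p:ℕ) = (q:ℕ) + 1) := by omega
          simp [this]
        rw [hs2, ih p]
        simp [hp]
      · obtain ⟨j, hj⟩ := Nat.exists_eq_succ_of_ne_zero hp
        have hjN : j < N := by omega
        set q₀ : Fin N := ⟨j, hjN⟩ with hq0
        have hs2 : ∑ q : Fin N, (T ^ k) z q * (if (p:ℕ) = (q:ℕ) + 1 then 1/lam else 0)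
            = (T ^ k) z q₀ * (1/lam) := by
          rw [Finset.sum_eq_single q₀]
          · simp [hq0, hj]
          · intro q _ hq
            have : ¬ ((p:ℕ) = (q:ℕ) + 1) := by
              intro hc
              exact hq (Fin.ext (show (q:ℕ) = j by omega))
            simp [this]
          · intro hc
            exact absurd (Finset.mem_univ q₀) hc
        rw [hs2, ih p, ih q₀]
        have hq0v : (q₀ : ℕ) = j := rfl
        rw [hq0v, hj, Nat.choose_succ_succ]
        push_cast
        rw [pow_succ]
        ring
  -- the entry as a real sum
  set f : Fin N → ℝ := fun p =>
    (n.choose p.val * m.choose p.val : ℝ) * Complex.normSq ((1/lam) ^ p.val) with hf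
  refine ⟨∑ p : Fin N, f p, ?_, ?_⟩
  · have hcp : (Tᴴ) ^ m = (T ^ m)ᴴ := (Matrix.conjTranspose_pow T m).symm
    rw [Matrix.mul_apply]
    have : ∀ p : Fin N, (T ^ n) z p * ((Tᴴ) ^ m) p z = (f p : ℂ) := by
      intro p
      rw [hcp, Matrix.conjTranspose_apply, hrow n p, hrow m p]
      simp only [hf, Complex.ofReal_mul, Complex.ofReal_natCast]
      rw [← Complex.mul_conj]
      simp only [Complex.star_def, _root_.map_mul, Complex.conj_natCast]
      ring
    rw [Finset.sum_congr rfl (fun p _ => this p)]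
    push_cast
    rfl
  · have hnonneg : ∀ p : Fin N, 0 ≤ f p := by
      intro p
      apply mul_nonneg
      · positivity
      · exact Complex.normSq_nonneg _
    have hzo : z ≠ o := by
      intro hc
      have : (0:ℕ) = 1 := congrArg Fin.val hc
      omega
    have hsub : ({z, o} : Finset (Fin N)) ⊆ Finset.univ := Finset.subset_univ _
    have hle : ∑ p ∈ ({z, o} : Finset (Fin N)), f p ≤ ∑ p : Fin N, f p :=
      Finset.sum_le_sum_of_subset_of_nonneg hsub (fun i _ _ => hnonneg i)
    rw [Finset.sum_pair hzo] at hle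
    have hfz : f z = 1 := by simp [hf, hz]
    have hfo : f o = (n * m : ℝ) / ‖lam‖ ^ 2 := by
      rw [hf]
      simp only [ho]
      rw [Nat.choose_one_right, Nat.choose_one_right, pow_one]
      rw [Complex.normSq_div, Complex.normSq_one, Complex.normSq_eq_norm_sq]
      field_simp
    rw [hfz, hfo] at hle
    exact hle
end
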